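/- For integers n ≥ 1, m ≥ 1, nonnegative integers a_1,…,a_{m-1}, and a_m ≥ 1, one has P_n(a_1,…,a_{m-1},a_m) = P_{n-1}(a_1,…,a_{m-1}, a_m − 1) − P_{n-1}(a_1,…,a_{m-1}, a_m, a_m − 1) + 2·P_{n-1}(a_1,…,a_{m-1}, a_m) − P_{n-1}(a_1,…,a_{m-1}, a_m, a_m) + P_{n-1}(a_1,…,a_{m-1}, a_m + 1) − P_{n-1}(a_1,…,a_{m-1}, a_m, a_m + 1). -/

import Mathlib

/-- A Dyck path: a finite sequence of ±1 steps with all partial sums nonnegative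
and total sum zero. -/
def IsDyckPath (p : List ℤ) : Prop :=
  (∀ s ∈ p, s = 1 ∨ s = -1) ∧ (∀ k, 0 ≤ (p.take k).sum) ∧ p.sum = 0

/-- The height of a path: the maximum of its partial sums (0 for the empty path). -/
def pathHeight (p : List ℤ) : ℕ :=
  Finset.sup (Finset.range (p.length + 1)) (fun k => ((p.take k).sum).toNat)

/-- Super-Catalan numbers `T(m,n) = (2m)!(2n)!/(2·m!·n!·(m+n)!)`, as a rational number. -/
def superCatalan (m n : ℕ) : ℚ :=
  ((2 * m).factorial * (2 * n).factorial : ℚ) /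
    (2 * m.factorial * n.factorial * (m + n).factorial)

/-- `G n m k`: the number of `m`-tuples of Dyck paths of total length `2n` all of whose
pairwise height differences are at most `k` (this is `0` when `n < 0`). -/
noncomputable def G (n : ℤ) (m k : ℕ) : ℕ :=
  Nat.card {p : Fin m → List ℤ //
    (∀ i, IsDyckPath (p i)) ∧
    (∑ i, ((p i).length : ℤ)) = 2 * n ∧
    ∀ i j, |(pathHeight (p i) : ℤ) - (pathHeight (p j) : ℤ)| ≤ (k : ℤ)}

/-- The path-height function `P n [a₁,…,aₘ]`: the number of `m`-tuples of Dyck paths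
of total length `2n` whose `i`-th path has height `aᵢ`. -/
noncomputable def P (n : ℤ) (a : List ℕ) : ℕ :=
  Nat.card {p : Fin a.length → List ℤ //
    (∀ i, IsDyckPath (p i)) ∧
    (∑ i, ((p i).length : ℤ)) = 2 * n ∧
    ∀ i, pathHeight (p i) = a.get i}

/-- `Qx n x [a₀,…,a_k]` is `P n` evaluated at `a₀` copies of `x`, `a₁` copies of `x+1`, …,
`a_k` copies of `x+k`. -/
noncomputable def Qx (n : ℤ) (x : ℕ) (a : List ℕ) : ℕ :=
  P n (a.zipIdx.flatMap fun q => List.replicate q.1 (x + q.2))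

/-- The grouped path-height function `Q n a = ∑_{x=0}^∞ Qx n x a`. Whenever some entry
of `a` is positive (as in every application below) all terms with `x > n` vanish, since
a Dyck path of height at least `x` has length at least `2x`; so the infinite sum equals
its truncation at `x = n`. -/
noncomputable def Q (n : ℤ) (a : List ℕ) : ℕ :=
  ∑ x ∈ Finset.range (n.toNat + 1), Qx n x a

namespace DyckAux

lemma dyck_nil : IsDyckPath [] := ⟨by simp, by simp, by simp⟩

lemma sum_take_append (p q : List ℤ) (k : ℕ) :
    ((p ++ q).take k).sum = (p.take k).sum + (q.take (k - p.length)).sum := by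
  rw [List.take_append, List.sum_append]

lemma sum_take_toNat_le (p : List ℤ) (k : ℕ) :
    ((p.take k).sum).toNat ≤ pathHeight p := by
  rcases le_or_gt k p.length with h | h
  · exact Finset.le_sup (f := fun k => ((p.take k).sum).toNat)
      (Finset.mem_range.2 (by omega))
  · rw [List.take_of_length_le (le_of_lt h)]
    have := Finset.le_sup (f := fun k => ((p.take k).sum).toNat)
      (Finset.mem_range.2 (Nat.lt_succ_self p.length))
    simpa [pathHeight] using this

lemma pathHeight_le {p : List ℤ} {m : ℕ} (h : ∀ k, ((p.take k).sum).toNat ≤ m) :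
    pathHeight p ≤ m :=
  Finset.sup_le fun k _ => h k

lemma exists_take_height (p : List ℤ) :
    ∃ k ≤ p.length, ((p.take k).sum).toNat = pathHeight p := by
  obtain ⟨k, hk, hk2⟩ := Finset.exists_mem_eq_sup (Finset.range (p.length + 1))
    (by simp) (fun k => ((p.take k).sum).toNat)
  have := Finset.mem_range.1 hk
  exact ⟨k, by omega, hk2.symm⟩

lemma pathHeight_nil : pathHeight ([] : List ℤ) = 0 := by simp [pathHeight]

/-- height of concatenation when the first part has sum zero -/
lemma pathHeight_append {p q : List ℤ} (hp : p.sum = 0) :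
    pathHeight (p ++ q) = max (pathHeight p) (pathHeight q) := by
  apply le_antisymm
  · apply pathHeight_le
    intro k
    rw [sum_take_append]
    rcases le_or_gt k p.length with h | h
    · have : k - p.length = 0 := by omega
      rw [this]
      simpa using le_max_of_le_left (sum_take_toNat_le p k)
    · rw [List.take_of_length_le (le_of_lt h), hp, zero_add]
      exact le_max_of_le_right (sum_take_toNat_le q _)
  · apply max_le
    · apply pathHeight_le
      intro k
      have h1 : ((p ++ q).take (min k p.length)).sum = (p.take k).sum := by
        rw [sum_take_append]
        have h0 : min k p.length - p.length = 0 := by omega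
        rw [h0]
        rcases le_or_gt k p.length with h | h
        · rw [min_eq_left h]; simp
        · rw [min_eq_right (le_of_lt h), List.take_of_length_le (le_of_lt h),
            List.take_length]; simp
      calc ((p.take k).sum).toNat = (((p ++ q).take (min k p.length)).sum).toNat := by rw [h1]
        _ ≤ _ := sum_take_toNat_le _ _
    · apply pathHeight_le
      intro k
      have h1 : ((p ++ q).take (p.length + k)).sum = (q.take k).sum := by
        rw [sum_take_append]
        rw [List.take_of_length_le (by simp), hp, zero_add]
        have : p.length + k - p.length = k := by omega
        rw [this]
      calc ((q.take k).sum).toNat = (((p ++ q).take (p.length + k)).sum).toNat := by rw [h1]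
        _ ≤ _ := sum_take_toNat_le _ _

end DyckAux

namespace DyckAux

lemma sum_take_drop (p : List ℤ) (m j : ℕ) :
    ((p.drop m).take j).sum = (p.take (m + j)).sum - (p.take m).sum := by
  have h : p.take (m + j) = p.take m ++ (p.drop m).take j := List.take_add
  rw [h, List.sum_append]
  ring

lemma length_even {p : List ℤ} (hp : IsDyckPath p) : ∃ m, p.length = 2 * m := by
  obtain ⟨h1, htk, h3⟩ := hp
  suffices h : (p.length : ℤ) % 2 = p.sum % 2 by
    rw [h3] at h
    exact ⟨p.length / 2, by omega⟩
  clear htk h3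
  induction p with
  | nil => simp
  | cons x t ih =>
    have hx : x = 1 ∨ x = -1 := h1 x (by simp)
    have ht := ih (fun s hs => h1 s (by simp [hs]))
    simp only [List.length_cons, List.sum_cons]
    push_cast
    rcases hx with hx | hx <;> rw [hx] <;> omega

lemma height_pos_of_ne_nil {p : List ℤ} (hp : IsDyckPath p) (hne : p ≠ []) :
    1 ≤ pathHeight p := by
  obtain ⟨x, t, rfl⟩ := List.exists_cons_of_ne_nil hne
  have hx : x = 1 ∨ x = -1 := hp.1 x (by simp)
  have h1 : ((x :: t).take 1).sum = x := by simp
  have hge : 0 ≤ ((x :: t).take 1).sum := hp.2.1 1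
  have hx1 : x = 1 := by rcases hx with h | h; exact h; rw [h1, h] at hge; omega
  subst hx1
  have := sum_take_toNat_le (1 :: t) 1
  rw [h1] at this
  simpa using this

lemma eq_nil_of_height_zero {p : List ℤ} (hp : IsDyckPath p) (h0 : pathHeight p = 0) :
    p = [] := by
  by_contra hne
  have := height_pos_of_ne_nil hp hne
  omega

/-- The composition `1 :: a ++ (-1) :: b` -/
def compose (a b : List ℤ) : List ℤ := (1 :: a ++ [-1]) ++ b

lemma compose_length (a b : List ℤ) :
    (compose a b).length = a.length + b.length + 2 := by
  simp [compose]; omega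

lemma arch_dyck {a : List ℤ} (ha : IsDyckPath a) : IsDyckPath (1 :: a ++ [-1]) := by
  obtain ⟨h1, h2, h3⟩ := ha
  refine ⟨?_, ?_, ?_⟩
  · intro s hs
    rcases List.mem_cons.1 hs with h | h
    · left; exact h
    · rcases List.mem_append.1 h with h | h
      · exact h1 s h
      · right; simpa using h
  · intro k
    cases k with
    | zero => simp
    | succ j =>
      have : ((1 :: a ++ [-1]).take (j + 1)).sum = 1 + ((a ++ [-1]).take j).sum := by
        simp [List.take_succ_cons]
      rw [this, sum_take_append]
      have hji := h2 j
      have : ([(-1 : ℤ)].take (j - a.length)).sum ≥ -1 := by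
        rcases Nat.eq_zero_or_pos (j - a.length) with h | h
        · rw [h]; simp
        · rw [List.take_of_length_le (by simp only [List.length_singleton]; omega)]; simp
      omega
  · simp [h3]

lemma dyck_append {a b : List ℤ} (ha : IsDyckPath a) (hb : IsDyckPath b) :
    IsDyckPath (a ++ b) := by
  refine ⟨?_, ?_, ?_⟩
  · intro s hs
    rcases List.mem_append.1 hs with h | h
    · exact ha.1 s h
    · exact hb.1 s h
  · intro k
    rw [sum_take_append]
    have := ha.2.1 k
    have := hb.2.1 (k - a.length)
    omega
  · simp [ha.2.2, hb.2.2]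

lemma compose_dyck {a b : List ℤ} (ha : IsDyckPath a) (hb : IsDyckPath b) :
    IsDyckPath (compose a b) := dyck_append (arch_dyck ha) hb

lemma pathHeight_arch {a : List ℤ} (ha : IsDyckPath a) :
    pathHeight (1 :: a ++ [-1]) = pathHeight a + 1 := by
  apply le_antisymm
  · apply pathHeight_le
    intro k
    cases k with
    | zero => simp
    | succ j =>
      have h : ((1 :: a ++ [-1]).take (j + 1)).sum = 1 + ((a ++ [-1]).take j).sum := by
        simp [List.take_succ_cons]
      rw [h, sum_take_append]
      have h1 := sum_take_toNat_le a j
      have h2 : 0 ≤ (a.take j).sum := ha.2.1 j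
      have h3 : ([(-1 : ℤ)].take (j - a.length)).sum ≤ 0 := by
        rcases Nat.eq_zero_or_pos (j - a.length) with h | h
        · rw [h]; simp
        · rw [List.take_of_length_le (by simp only [List.length_singleton]; omega)]; simp
      omega
  · obtain ⟨k, hk, hk2⟩ := exists_take_height a
    have h : ((1 :: a ++ [-1]).take (k + 1)).sum = 1 + (a.take k).sum := by
      simp only [List.cons_append, List.take_succ_cons, List.sum_cons]
      rw [sum_take_append]
      have : k - a.length = 0 := by omega
      rw [this]
      simp
    have h2 : 0 ≤ (a.take k).sum := ha.2.1 k
    have := sum_take_toNat_le (1 :: a ++ [-1]) (k + 1)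
    rw [h] at this
    omega

lemma pathHeight_compose {a b : List ℤ} (ha : IsDyckPath a) :
    pathHeight (compose a b) = max (pathHeight a + 1) (pathHeight b) := by
  rw [compose, pathHeight_append (by simp [ha.2.2]), pathHeight_arch ha]

end DyckAux

namespace DyckAux

lemma aux_len_not_lt {a a' b b' : List ℤ} (ha : IsDyckPath a) (ha' : IsDyckPath a')
    (h : a ++ (-1 :: b) = a' ++ (-1 :: b')) : ¬ a.length < a'.length := by
  intro hlt
  have h1 : ((a ++ (-1 :: b)).take (a.length + 1)).sum = -1 := by
    rw [sum_take_append, List.take_of_length_le (by omega), ha.2.2]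
    have : a.length + 1 - a.length = 1 := by omega
    rw [this]
    simp
  have h2 : ((a' ++ (-1 :: b')).take (a.length + 1)).sum = (a'.take (a.length + 1)).sum := by
    rw [sum_take_append]
    have : a.length + 1 - a'.length = 0 := by omega
    rw [this]
    simp
  have h3 := ha'.2.1 (a.length + 1)
  rw [h] at h1
  omega

lemma compose_eq_cons (a b : List ℤ) : compose a b = 1 :: (a ++ (-1 :: b)) := by
  simp [compose]

lemma compose_inj {a a' b b' : List ℤ} (ha : IsDyckPath a) (ha' : IsDyckPath a')
    (h : compose a b = compose a' b') : a = a' ∧ b = b' := by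
  rw [compose_eq_cons, compose_eq_cons] at h
  have h' : a ++ (-1 :: b) = a' ++ (-1 :: b') := by
    injection h
  have hlen : a.length = a'.length := by
    have h1 := aux_len_not_lt ha ha' h'
    have h2 := aux_len_not_lt ha' ha h'.symm
    omega
  obtain ⟨h1, h2⟩ := List.append_inj h' hlen
  exact ⟨h1, by injection h2⟩

lemma exists_decomp {p : List ℤ} (hp : IsDyckPath p) (hne : p ≠ []) :
    ∃ a b, IsDyckPath a ∧ IsDyckPath b ∧ p = compose a b := by
  -- p starts with 1
  have hlen : 1 ≤ p.length := by
    cases p; simp at hne; simp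
  have hhead : p.take 1 = [1] := by
    obtain ⟨x, t, rfl⟩ := List.exists_cons_of_ne_nil hne
    have hx : x = 1 ∨ x = -1 := hp.1 x (by simp)
    have hge : 0 ≤ ((x :: t).take 1).sum := hp.2.1 1
    simp only [List.take_succ_cons, List.take_zero] at hge ⊢
    simp at hge
    rcases hx with h | h
    · rw [h]
    · rw [h] at hge; omega
  -- first return
  have hex : ∃ k, (p.take (k + 1)).sum = 0 := by
    refine ⟨p.length - 1, ?_⟩
    have : p.length - 1 + 1 = p.length := by omega
    rw [this, List.take_length, hp.2.2]
  set k₀ := Nat.find hex with hk₀def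
  have hk₀ : (p.take (k₀ + 1)).sum = 0 := Nat.find_spec hex
  have hmin : ∀ j, j < k₀ → (p.take (j + 1)).sum ≠ 0 := fun j hj => Nat.find_min hex hj
  have hpos : ∀ j, 1 ≤ j → j ≤ k₀ → 1 ≤ (p.take j).sum := by
    intro j h1 h2
    have := hp.2.1 j
    have := hmin (j - 1) (by omega)
    have : (p.take j).sum ≠ 0 := by
      have hj : j - 1 + 1 = j := by omega
      rw [hj] at this
      exact this
    omega
  have hk₀1 : 1 ≤ k₀ := by
    by_contra h
    have h0 : k₀ = 0 := by omega
    rw [h0] at hk₀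
    rw [hhead] at hk₀
    simp at hk₀
  have hk₀len : k₀ + 1 ≤ p.length := by
    have hple : (p.take (p.length - 1 + 1)).sum = 0 := by
      have h : p.length - 1 + 1 = p.length := by omega
      rw [h, List.take_length, hp.2.2]
    have : k₀ ≤ p.length - 1 := Nat.find_le hple
    omega
  have hsk : (p.take k₀).sum = 1 ∧ p[k₀]'(by omega) = -1 := by
    have hs := List.sum_take_succ p k₀ (by omega)
    have hget : p[k₀]'(by omega) = 1 ∨ p[k₀]'(by omega) = -1 :=
      hp.1 _ (List.getElem_mem _)
    have h1 := hpos k₀ hk₀1 le_rfl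
    rw [hs] at hk₀
    rcases hget with h | h <;> rw [h] at hk₀ ⊢ <;> omega
  -- define the pieces
  refine ⟨(p.drop 1).take (k₀ - 1), p.drop (k₀ + 1), ?_, ?_, ?_⟩
  · refine ⟨?_, ?_, ?_⟩
    · intro s hs
      exact hp.1 s (List.mem_of_mem_drop (List.mem_of_mem_take hs))
    · intro j
      rw [List.take_take, sum_take_drop]
      have h1 : (p.take 1).sum = 1 := by rw [hhead]; simp
      have h2 := hpos (1 + min j (k₀ - 1)) (by omega) (by omega)
      omega
    · rw [sum_take_drop]
      have h1 : (p.take 1).sum = 1 := by rw [hhead]; simp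
      have h2 : 1 + (k₀ - 1) = k₀ := by omega
      rw [h2, h1, hsk.1]
      ring
  · refine ⟨?_, ?_, ?_⟩
    · intro s hs
      exact hp.1 s (List.mem_of_mem_drop hs)
    · intro j
      rw [sum_take_drop, hk₀]
      have := hp.2.1 (k₀ + 1 + j)
      omega
    · have h := congrArg List.sum (List.take_append_drop (k₀ + 1) p)
      rw [List.sum_append, hk₀, hp.2.2] at h
      omega
  · rw [compose_eq_cons]
    have h1 : p.take (k₀ + 1) = p.take k₀ ++ [-1] := by
      rw [List.take_succ]
      congr 1
      rw [List.getElem?_eq_getElem (by omega), hsk.2]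
      rfl
    have h2 : p.take k₀ = 1 :: (p.drop 1).take (k₀ - 1) := by
      have hk : 1 + (k₀ - 1) = k₀ := by omega
      have ht := List.take_add (l := p) (i := 1) (j := k₀ - 1)
      rw [hk] at ht
      rw [ht, hhead]
      rfl
    calc p = p.take (k₀ + 1) ++ p.drop (k₀ + 1) := (List.take_append_drop _ _).symm
      _ = (1 :: (p.drop 1).take (k₀ - 1) ++ [-1]) ++ p.drop (k₀ + 1) := by rw [h1, h2]
      _ = _ := by simp

end DyckAux

namespace DyckAux

lemma map_pm (l : List ℤ) (h : ∀ x ∈ l, x = 1 ∨ x = -1) :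
    (l.map (fun x => decide (x = 1))).map (fun b : Bool => if b then (1:ℤ) else -1) = l := by
  induction l with
  | nil => simp
  | cons x t ih =>
    have hx := h x (by simp)
    have ht := ih (fun s hs => h s (by simp [hs]))
    rcases hx with hx | hx <;> subst hx <;> simp [ht]

lemma finite_pm (L : ℕ) : {l : List ℤ | l.length ≤ L ∧ ∀ x ∈ l, x = 1 ∨ x = -1}.Finite := by
  have h1 : {l : List Bool | l.length ≤ L}.Finite := List.finite_length_le Bool L
  apply Set.Finite.subset (h1.image (List.map (fun b : Bool => if b then (1:ℤ) else -1)))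
  rintro l ⟨hlen, hpm⟩
  exact ⟨l.map (fun x => decide (x = 1)), by simpa using hlen, map_pm l hpm⟩

/-- Dyck paths of half-length `N` and height at most `h`. -/
def A (N h : ℕ) : Type :=
  {p : List ℤ // IsDyckPath p ∧ p.length = 2 * N ∧ pathHeight p ≤ h}

/-- Dyck paths of half-length `N` and height exactly `a`. -/
def E (N a : ℕ) : Type :=
  {p : List ℤ // IsDyckPath p ∧ p.length = 2 * N ∧ pathHeight p = a}

instance finA (N h : ℕ) : Finite (A N h) := by
  have := (finite_pm (2 * N)).to_subtype
  apply Finite.of_injective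
    (f := fun p : A N h => (⟨p.1, by rw [Set.mem_setOf_eq, p.2.2.1]; exact ⟨le_rfl, p.2.1.1⟩⟩ :
      {l : List ℤ | l.length ≤ 2 * N ∧ ∀ x ∈ l, x = 1 ∨ x = -1}))
  intro p q h
  simp only [Subtype.mk.injEq] at h
  exact Subtype.ext h

instance finE (N a : ℕ) : Finite (E N a) := by
  have := (finite_pm (2 * N)).to_subtype
  apply Finite.of_injective
    (f := fun p : E N a => (⟨p.1, by rw [Set.mem_setOf_eq, p.2.2.1]; exact ⟨le_rfl, p.2.1.1⟩⟩ :
      {l : List ℤ | l.length ≤ 2 * N ∧ ∀ x ∈ l, x = 1 ∨ x = -1}))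
  intro p q h
  simp only [Subtype.mk.injEq] at h
  exact Subtype.ext h

noncomputable def dck (N h : ℕ) : ℕ := Nat.card (A N h)
noncomputable def deq (N a : ℕ) : ℕ := Nat.card (E N a)

lemma card_sigma_fin {m : ℕ} (f : Fin m → Type*) [∀ i, Finite (f i)] :
    Nat.card (Σ i, f i) = ∑ i, Nat.card (f i) := by
  haveI := fun i => Fintype.ofFinite (f i)
  simp only [Nat.card_eq_fintype_card]
  exact Fintype.card_sigma

lemma nil_mem_A (N h : ℕ) (hN : N = 0) : IsDyckPath ([] : List ℤ) ∧
    ([] : List ℤ).length = 2 * N ∧ pathHeight ([] : List ℤ) ≤ h :=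
  ⟨dyck_nil, by simp [hN], by simp [pathHeight_nil]⟩

lemma dck_zero (h : ℕ) : dck 0 h = 1 := by
  rw [dck]
  haveI : Unique (A 0 h) := by
    refine ⟨⟨⟨[], nil_mem_A 0 h rfl⟩⟩, ?_⟩
    rintro ⟨p, hp, hlen, hh⟩
    have : p = [] := List.length_eq_zero_iff.1 (by omega)
    subst this
    rfl
  exact Nat.card_unique

lemma dck_of_height_zero (N : ℕ) : dck N 0 = if N = 0 then 1 else 0 := by
  split
  · next h => subst h; exact dck_zero 0
  · next h =>
    rw [dck]
    haveI : IsEmpty (A N 0) := by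
      constructor
      rintro ⟨p, hp, hlen, hh⟩
      have hnil : p = [] := eq_nil_of_height_zero hp (by omega)
      subst hnil
      simp at hlen
      omega
    exact Nat.card_of_isEmpty

lemma deq_of_height_zero (N : ℕ) : deq N 0 = if N = 0 then 1 else 0 := by
  rw [deq]
  split
  · next h =>
    subst h
    haveI : Unique (E 0 0) := by
      refine ⟨⟨⟨[], dyck_nil, by simp, by simp [pathHeight_nil]⟩⟩, ?_⟩
      rintro ⟨p, hp, hlen, hh⟩
      have : p = [] := List.length_eq_zero_iff.1 (by omega)
      subst this
      rfl
    exact Nat.card_unique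
  · next h =>
    haveI : IsEmpty (E N 0) := by
      constructor
      rintro ⟨p, hp, hlen, hh⟩
      have hnil : p = [] := eq_nil_of_height_zero hp hh
      subst hnil
      simp at hlen
      omega
    exact Nat.card_of_isEmpty

lemma deq_add_dck (N a : ℕ) : deq N (a + 1) + dck N a = dck N (a + 1) := by
  rw [deq, dck, dck, ← Nat.card_sum]
  apply Nat.card_congr
  refine ⟨?_, ?_, ?_, ?_⟩
  · rintro (⟨p, hp, hlen, hh⟩ | ⟨p, hp, hlen, hh⟩)
    · exact ⟨p, hp, hlen, le_of_eq hh⟩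
    · exact ⟨p, hp, hlen, by omega⟩
  · rintro ⟨p, hp, hlen, hh⟩
    by_cases h : pathHeight p = a + 1
    · exact Sum.inl ⟨p, hp, hlen, h⟩
    · exact Sum.inr ⟨p, hp, hlen, by omega⟩
  · rintro (⟨p, hp, hlen, hh⟩ | ⟨p, hp, hlen, hh⟩) <;> simp only [] <;> split <;>
      first | rfl | (next hcontra => omega) | rfl
  · rintro ⟨p, hp, hlen, hh⟩
    simp only []
    split <;> rfl

/-- The first-return recursion. -/
lemma dck_succ (N h : ℕ) :
    dck (N + 1) (h + 1) = ∑ k ∈ Finset.range (N + 1), dck k h * dck (N - k) (h + 1) := by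
  classical
  have key : Nat.card (A (N + 1) (h + 1)) =
      Nat.card (Σ k : Fin (N + 1), A k h × A (N - (k : ℕ)) (h + 1)) := by
    apply Nat.card_congr
    symm
    apply Equiv.ofBijective (f := fun x : Σ k : Fin (N + 1), A k h × A (N - (k : ℕ)) (h + 1) =>
      (⟨compose x.2.1.1 x.2.2.1, ?_, ?_, ?_⟩ : A (N + 1) (h + 1)))
    · constructor
      · rintro ⟨k, ⟨a, ha, hal, hah⟩, ⟨b, hb, hbl, hbh⟩⟩ ⟨k', ⟨a', ha', hal', hah'⟩, ⟨b', hb', hbl', hbh'⟩⟩ hfeq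
        simp only [Subtype.mk.injEq] at hfeq
        obtain ⟨hae, hbe⟩ := compose_inj ha ha' hfeq
        have hk : k = k' := by
          have := k.2
          have := k'.2
          apply Fin.ext
          have : 2 * (k : ℕ) = 2 * (k' : ℕ) := by rw [← hal, ← hal', hae]
          omega
        subst hk
        subst hae
        subst hbe
        rfl
      · rintro ⟨p, hp, hlen, hh⟩
        have hne : p ≠ [] := by
          intro h0
          subst h0
          simp at hlen
        obtain ⟨a, b, ha, hb, rfl⟩ := exists_decomp hp hne
        obtain ⟨ka, hka⟩ := length_even ha
        obtain ⟨kb, hkb⟩ := length_even hb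
        have hcl := compose_length a b
        have hkaN : ka ≤ N := by omega
        have hkb' : b.length = 2 * (N - ka) := by omega
        have hhc := pathHeight_compose (b := b) ha
        rw [hhc] at hh
        refine ⟨⟨⟨ka, by omega⟩, ⟨a, ha, hka, ?_⟩, ⟨b, hb, hkb', ?_⟩⟩, rfl⟩
        · simp only [max_le_iff] at hh
          omega
        · simp only [max_le_iff] at hh
          exact hh.2
    · exact compose_dyck x.2.1.2.1 x.2.2.2.1
    · rw [compose_length, x.2.1.2.2.1, x.2.2.2.2.1]
      have := x.1.2
      omega
    · rw [pathHeight_compose x.2.1.2.1]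
      have h1 := x.2.1.2.2.2
      have h2 := x.2.2.2.2.2
      simp only [max_le_iff]
      omega
  rw [dck, key, card_sigma_fin]
  rw [Fin.sum_univ_eq_sum_range (fun k => Nat.card (A k h × A (N - k) (h + 1)))]
  apply Finset.sum_congr rfl
  intro k _
  rw [Nat.card_prod]
  rfl

end DyckAux

namespace DyckAux

open PowerSeries

noncomputable def Gps (h : ℕ) : PowerSeries ℤ := PowerSeries.mk fun N => (dck N h : ℤ)
noncomputable def Fps (a : ℕ) : PowerSeries ℤ := PowerSeries.mk fun N => (deq N a : ℤ)

lemma Gps_zero : Gps 0 = 1 := by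
  ext N
  rw [Gps, coeff_mk, PowerSeries.coeff_one, dck_of_height_zero]
  split <;> simp

lemma Fps_zero : Fps 0 = 1 := by
  ext N
  rw [Fps, coeff_mk, PowerSeries.coeff_one, deq_of_height_zero]
  split <;> simp

lemma Gps_rec (h : ℕ) : Gps (h + 1) = 1 + X * Gps h * Gps (h + 1) := by
  ext N
  rw [Gps, coeff_mk]
  cases N with
  | zero =>
    simp only [map_add, PowerSeries.coeff_one]
    rw [mul_assoc, PowerSeries.coeff_zero_X_mul]
    simp [dck_zero]
  | succ N =>
    rw [map_add, PowerSeries.coeff_one, mul_assoc, PowerSeries.coeff_succ_X_mul,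
      PowerSeries.coeff_mul, Finset.Nat.sum_antidiagonal_eq_sum_range_succ_mk]
    simp only [Gps, coeff_mk]
    rw [dck_succ]
    push_cast
    simp

lemma Fps_eq (a : ℕ) : Fps (a + 1) = Gps (a + 1) - Gps a := by
  ext N
  rw [Fps, map_sub, Gps, Gps, coeff_mk, coeff_mk, coeff_mk]
  have := deq_add_dck N a
  push_cast [← this]
  ring

lemma master (a : ℕ) :
    Fps (a + 1) = X * (Fps a * (1 - Fps (a + 1)) + 2 * Fps (a + 1) - Fps (a + 1) ^ 2
      + Fps (a + 2) * (1 - Fps (a + 1))) := by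
  obtain ⟨u, hu, hFa⟩ : ∃ u, Gps a = 1 + X * u * Gps a ∧ Fps a = Gps a - u := by
    cases a with
    | zero => exact ⟨0, by simp [Gps_zero], by simp [Fps_zero, Gps_zero]⟩
    | succ b => exact ⟨Gps b, Gps_rec b, Fps_eq b⟩
  have h2 := Gps_rec a
  have h3 := Gps_rec (a + 1)
  have hF1 := Fps_eq a
  have hF2 := Fps_eq (a + 1)
  rw [hFa, hF1, hF2]
  linear_combination (X * Gps (a + 1) - 1) * hu + (1 + X * Gps (a + 2) - X * u) * h2
    - X * Gps a * h3

end DyckAux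

noncomputable def P' (n : ℤ) (a : List ℕ) : ℕ :=
  Nat.card {p : Fin a.length → List ℤ //
    (∀ i, IsDyckPath (p i)) ∧
    (∑ i, ((p i).length : ℤ)) = 2 * n ∧
    ∀ i, pathHeight (p i) = a.get i}

namespace DyckAux

/-- The tuple type underlying `P`. -/
def PT (n : ℤ) (a : List ℕ) : Type :=
  {p : Fin a.length → List ℤ //
    (∀ i, IsDyckPath (p i)) ∧
    (∑ i, ((p i).length : ℤ)) = 2 * n ∧
    ∀ i, pathHeight (p i) = a.get i}

lemma P'_eq (n : ℤ) (a : List ℕ) : P' n a = Nat.card (PT n a) := rfl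

lemma len_bound {n : ℤ} {a : List ℕ} (p : PT n a) (i : Fin a.length) :
    ((p.1 i).length : ℤ) ≤ 2 * n := by
  have h := p.2.2.1
  calc ((p.1 i).length : ℤ) ≤ ∑ j, ((p.1 j).length : ℤ) :=
        Finset.single_le_sum (f := fun j => ((p.1 j).length : ℤ))
          (fun j _ => by positivity) (Finset.mem_univ i)
    _ = 2 * n := h

instance finPT (n : ℤ) (a : List ℕ) : Finite (PT n a) := by
  set S := {l : List ℤ | l.length ≤ (2 * n).toNat ∧ ∀ x ∈ l, x = 1 ∨ x = -1} with hS
  have hSfin : S.Finite := finite_pm _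
  have := hSfin.to_subtype
  apply Finite.of_injective (f := fun p : PT n a => fun i : Fin a.length =>
    (⟨p.1 i, by
      constructor
      · have := len_bound p i
        omega
      · exact (p.2.1 i).1⟩ : S))
  intro p q h
  apply Subtype.ext
  funext i
  have := congrFun h i
  simp only [Subtype.mk.injEq] at this
  exact this

lemma sum_split (c : ℕ) (l : List ℕ) (g : Fin ((l ++ [c]).length) → ℤ) :
    ∑ i, g i = (∑ j : Fin l.length, g ⟨j, by simp⟩) + g ⟨l.length, by simp⟩ := by
  have hlen : (l ++ [c]).length = l.length + 1 := by simp
  rw [← Equiv.sum_comp (finCongr hlen.symm) g, Fin.sum_univ_castSucc]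
  congr 1

end DyckAux

namespace DyckAux

def qOf (c : ℕ) (l : List ℕ) (p : Fin ((l ++ [c]).length) → List ℤ) :
    Fin l.length → List ℤ :=
  fun j => p ⟨j.1, by simp⟩

def rOf (c : ℕ) (l : List ℕ) (p : Fin ((l ++ [c]).length) → List ℤ) : List ℤ :=
  p ⟨l.length, by simp⟩

lemma sum_split' (c : ℕ) (l : List ℕ) (p : Fin ((l ++ [c]).length) → List ℤ) :
    ∑ i, ((p i).length : ℤ)
      = (∑ j : Fin l.length, ((qOf c l p j).length : ℤ)) + ((rOf c l p).length : ℤ) :=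
  sum_split c l (fun i => ((p i).length : ℤ))

lemma P'_append (n : ℕ) (l : List ℕ) (c : ℕ) :
    P' (n : ℤ) (l ++ [c]) = ∑ k ∈ Finset.range (n + 1), P' (k : ℤ) l * deq (n - k) c := by
  classical
  have hlen : (l ++ [c]).length = l.length + 1 := by simp
  have key : Nat.card (PT (n : ℤ) (l ++ [c])) =
      Nat.card (Σ k : Fin (n + 1), PT ((k : ℕ) : ℤ) l × E (n - (k : ℕ)) c) := by
    apply Nat.card_congr
    symm
    apply Equiv.ofBijective (f := fun x : Σ k : Fin (n + 1), PT ((k : ℕ) : ℤ) l × E (n - (k : ℕ)) c =>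
      (⟨fun i : Fin ((l ++ [c]).length) =>
          if h : (i : ℕ) < l.length then x.2.1.1 ⟨i, h⟩ else x.2.2.1, ?_, ?_, ?_⟩ :
        PT (n : ℤ) (l ++ [c])))
    · constructor
      · rintro ⟨k, q, r⟩ ⟨k', q', r'⟩ hfeq
        simp only [Subtype.mk.injEq] at hfeq
        have hq : q.1 = q'.1 := by
          funext j
          have hj : (j : ℕ) < (l ++ [c]).length := by omega
          have := congrFun hfeq ⟨j, hj⟩
          simp only [j.2, dif_pos] at this
          simpa using this
        have hr : r.1 = r'.1 := by
          have hj : l.length < (l ++ [c]).length := by omega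
          have := congrFun hfeq ⟨l.length, hj⟩
          simpa using this
        have hk : k = k' := by
          have h1 := q.2.2.1
          have h2 := q'.2.2.1
          rw [hq] at h1
          apply Fin.ext
          omega
        subst hk
        have hq2 : q = q' := Subtype.ext hq
        have hr2 : r = r' := Subtype.ext hr
        subst hq2
        subst hr2
        rfl
      · rintro ⟨p, hD, hS, hH⟩
        have hd : IsDyckPath (rOf c l p) := hD _
        obtain ⟨kb, hkb⟩ := length_even hd
        have hsplit := sum_split' c l p
        rw [hS] at hsplit
        have hqnn : (0 : ℤ) ≤ ∑ j : Fin l.length, ((qOf c l p j).length : ℤ) :=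
          Finset.sum_nonneg fun j _ => by positivity
        have hkbn : kb ≤ n := by omega
        refine ⟨⟨⟨n - kb, by omega⟩, ⟨qOf c l p, ?_, ?_, ?_⟩, ⟨rOf c l p, hd, ?_, ?_⟩⟩, ?_⟩
        · intro j
          exact hD _
        · simp only []
          push_cast
          omega
        · intro j
          have hj : (j : ℕ) < (l ++ [c]).length := by omega
          have h1 := hH ⟨j.1, hj⟩
          have h2 : (l ++ [c]).get ⟨j.1, hj⟩ = l.get j := by
            simp only [List.get_eq_getElem]
            exact List.getElem_append_left j.2
          rw [h2] at h1
          exact h1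
        · simp only []
          omega
        · have hj : l.length < (l ++ [c]).length := by omega
          have h1 := hH ⟨l.length, hj⟩
          have h2 : (l ++ [c]).get ⟨l.length, hj⟩ = c := by
            simp only [List.get_eq_getElem]
            rw [List.getElem_append_right le_rfl]
            simp
          rw [h2] at h1
          exact h1
        · apply Subtype.ext
          funext i
          simp only []
          split
          · next h => rfl
          · next h =>
            have hi : (i : ℕ) = l.length := by
              have := i.2
              omega
            exact congrArg p (Fin.ext hi.symm)
    · intro i
      dsimp only []
      split
      · exact x.2.1.2.1 _
      · exact x.2.2.2.1
    · have hs := sum_split' c l (fun i : Fin ((l ++ [c]).length) =>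
        if h : (i : ℕ) < l.length then x.2.1.1 ⟨i, h⟩ else x.2.2.1)
      rw [hs]
      have h1 : (∑ j : Fin l.length,
          ((qOf c l (fun i : Fin ((l ++ [c]).length) =>
            if h : (i : ℕ) < l.length then x.2.1.1 ⟨i, h⟩ else x.2.2.1) j).length : ℤ))
          = 2 * ((x.1 : ℕ) : ℤ) := by
        refine Eq.trans ?_ x.2.1.2.2.1
        apply Finset.sum_congr rfl
        intro j _
        congr 1
        show (if h : (j : ℕ) < l.length then x.2.1.1 ⟨j, h⟩ else x.2.2.1).length = _
        rw [dif_pos j.2]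
      have h2 : (rOf c l (fun i : Fin ((l ++ [c]).length) =>
            if h : (i : ℕ) < l.length then x.2.1.1 ⟨i, h⟩ else x.2.2.1)) = x.2.2.1 := by
        show (if h : l.length < l.length then _ else _) = _
        rw [dif_neg (lt_irrefl _)]
      rw [h1, h2, x.2.2.2.2.1]
      have hk := x.1.2
      push_cast
      omega
    · intro i
      dsimp only []
      split
      · next h =>
        have h1 := x.2.1.2.2.2 ⟨i.1, h⟩
        have h2 : (l ++ [c]).get i = l.get ⟨i.1, h⟩ := by
          simp only [List.get_eq_getElem]
          exact List.getElem_append_left h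
        rw [h2]
        exact h1
      · next h =>
        have hi : (i : ℕ) = l.length := by
          have := i.2
          omega
        have h2 : (l ++ [c]).get i = c := by
          simp only [List.get_eq_getElem]
          rw [List.getElem_append i.2]
          rw [dif_neg h]
          simp
        rw [h2]
        exact x.2.2.2.2.2
  rw [P'_eq, key, card_sigma_fin]
  rw [Fin.sum_univ_eq_sum_range (fun k => Nat.card (PT ((k : ℕ) : ℤ) l × E (n - k) c))]
  apply Finset.sum_congr rfl
  intro k _
  rw [Nat.card_prod]
  rfl

end DyckAux

namespace DyckAux

open PowerSeries

noncomputable def Pps (l : List ℕ) : PowerSeries ℤ := PowerSeries.mk fun m => (P' (m : ℤ) l : ℤ)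

lemma Pps_append (l : List ℕ) (c : ℕ) : Pps (l ++ [c]) = Pps l * Fps c := by
  ext m
  rw [Pps, coeff_mk, PowerSeries.coeff_mul, Finset.Nat.sum_antidiagonal_eq_sum_range_succ_mk,
    P'_append]
  push_cast
  apply Finset.sum_congr rfl
  intro k hk
  rw [Pps, Fps, coeff_mk, coeff_mk]

end DyckAux

open DyckAux PowerSeries in
theorem path_height_shorten' (n : ℕ) (hn : 1 ≤ n) (l : List ℕ) (am : ℕ) (ham : 1 ≤ am) :
    (P' (n : ℤ) (l ++ [am]) : ℤ) =
      P' ((n : ℤ) - 1) (l ++ [am - 1]) - P' ((n : ℤ) - 1) (l ++ [am, am - 1])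
        + 2 * P' ((n : ℤ) - 1) (l ++ [am]) - P' ((n : ℤ) - 1) (l ++ [am, am])
        + P' ((n : ℤ) - 1) (l ++ [am + 1]) - P' ((n : ℤ) - 1) (l ++ [am, am + 1]) := by
  obtain ⟨a, rfl⟩ : ∃ a, am = a + 1 := ⟨am - 1, by omega⟩
  obtain ⟨n', rfl⟩ : ∃ n', n = n' + 1 := ⟨n - 1, by omega⟩
  have hP : ∀ (m : ℕ) (L : List ℕ), (P' ((m : ℕ) : ℤ) L : ℤ) = PowerSeries.coeff m (Pps L) :=
    fun m L => by rw [Pps, coeff_mk]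
  have hc : ((n' + 1 : ℕ) : ℤ) - 1 = ((n' : ℕ) : ℤ) := by push_cast; ring
  have hsub : a + 1 - 1 = a := by omega
  have hl2 : ∀ x : ℕ, l ++ [a + 1, x] = (l ++ [a + 1]) ++ [x] := fun x => by simp
  rw [hsub, hc, hl2, hl2, hl2, hP, hP, hP, hP, hP, hP, hP]
  simp only [Pps_append]
  have h22 : Fps (a + 1 + 1) = Fps (a + 2) := rfl
  rw [h22]
  -- LHS
  have hX : Pps l * (X * (Fps a * (1 - Fps (a + 1)) + 2 * Fps (a + 1) - Fps (a + 1) ^ 2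
      + Fps (a + 2) * (1 - Fps (a + 1))))
      = X * (Pps l * (Fps a * (1 - Fps (a + 1)) + 2 * Fps (a + 1) - Fps (a + 1) ^ 2
      + Fps (a + 2) * (1 - Fps (a + 1)))) := by ring
  have hL : (PowerSeries.coeff (n' + 1)) (Pps l * Fps (a + 1))
      = (PowerSeries.coeff n') (Pps l * (Fps a * (1 - Fps (a + 1)) + 2 * Fps (a + 1)
        - Fps (a + 1) ^ 2 + Fps (a + 2) * (1 - Fps (a + 1)))) := by
    conv_lhs => rw [master a]
    rw [hX, PowerSeries.coeff_succ_X_mul]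
  have final : Pps l * (Fps a * (1 - Fps (a + 1)) + 2 * Fps (a + 1) - Fps (a + 1) ^ 2
      + Fps (a + 2) * (1 - Fps (a + 1)))
      = (Pps l * Fps a - Pps l * Fps (a + 1) * Fps a)
        + (Pps l * Fps (a + 1) + Pps l * Fps (a + 1))
        - Pps l * Fps (a + 1) * Fps (a + 1)
        + Pps l * Fps (a + 2) - Pps l * Fps (a + 1) * Fps (a + 2) := by ring
  rw [hL, final]
  simp only [map_add, map_sub]
  ring

/-- For `n ≥ 1`, nonnegative integers `a₁,…,a_{m-1}` (the list `l`) and `aₘ ≥ 1`,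
`P_n(a₁,…,aₘ) = P_{n-1}(…, aₘ−1) − P_{n-1}(…, aₘ, aₘ−1) + 2·P_{n-1}(…, aₘ)
  − P_{n-1}(…, aₘ, aₘ) + P_{n-1}(…, aₘ+1) − P_{n-1}(…, aₘ, aₘ+1)`. -/
theorem path_height_shorten (n : ℕ) (hn : 1 ≤ n) (l : List ℕ) (am : ℕ) (ham : 1 ≤ am) :
    (P (n : ℤ) (l ++ [am]) : ℤ) =
      P ((n : ℤ) - 1) (l ++ [am - 1]) - P ((n : ℤ) - 1) (l ++ [am, am - 1])
        + 2 * P ((n : ℤ) - 1) (l ++ [am]) - P ((n : ℤ) - 1) (l ++ [am, am])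
        + P ((n : ℤ) - 1) (l ++ [am + 1]) - P ((n : ℤ) - 1) (l ++ [am, am + 1]) := by
  have h : ∀ (m : ℤ) (L : List ℕ), P m L = P' m L := fun _ _ => rfl
  rw [h, h, h, h, h, h, h]
  exact path_height_shorten' n hn l am ham
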